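/- For n ≥ 1, the restriction of tr_n to the commutative subalgebra Z_n is a symmetric and nondegenerate trace form: for all A, B ∈ Z_n, tr_n(AB) = tr_n(BA), and for every nonzero A ∈ Z_n there exists B ∈ Z_n with tr_n(AB) ≠ 0. -/
import Mathlib


/-- The lower shift matrix `Λ`, with entries `Λ_{i,j} = δ_{i,j+1}`. -/
def shiftΛ (n : ℕ) : Matrix (Fin n) (Fin n) ℝ :=
  Matrix.of fun i j => if (i : ℕ) = (j : ℕ) + 1 then 1 else 0

/-- The commutative subalgebra `Z_n`: the linear span of `I, Λ, …, Λ^{n-1}`. -/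
def Zn (n : ℕ) : Submodule ℝ (Matrix (Fin n) (Fin n) ℝ) :=
  Submodule.span ℝ (Set.range fun k : Fin n => shiftΛ n ^ (k : ℕ))

/-- The upper triangular matrix `M` with `M_{i,j} = 1/(n - j + i)` for `i ≤ j`. -/
noncomputable def trM (n : ℕ) : Matrix (Fin n) (Fin n) ℝ :=
  Matrix.of fun i j =>
    if (i : ℕ) ≤ (j : ℕ) then ((n : ℝ) - (j : ℕ) + (i : ℕ))⁻¹ else 0

/-- The trace-type map `tr_n : gl(n,ℝ) → ℝ`, `tr_n(A) = trace(M A)`. -/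
noncomputable def trn (n : ℕ) (A : Matrix (Fin n) (Fin n) ℝ) : ℝ :=
  Matrix.trace (trM n * A)

lemma shift_pow_apply (n p : ℕ) (i j : Fin n) :
    (shiftΛ n ^ p) i j = if (i : ℕ) = (j : ℕ) + p then 1 else 0 := by
  induction p generalizing i with
  | zero => simp [Matrix.one_apply, Fin.ext_iff]
  | succ p ih =>
    rw [pow_succ', Matrix.mul_apply]
    by_cases h : (j : ℕ) + p < n
    · rw [Finset.sum_eq_single (⟨(j:ℕ)+p, h⟩ : Fin n)]
      · rw [ih]
        simp only [shiftΛ, Matrix.of_apply, Fin.val_mk]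
        split_ifs <;> simp_all <;> omega
      · intro b _ hb
        have hb' : ¬ ((b:ℕ) = (j:ℕ) + p) := fun hh => hb (Fin.ext hh)
        rw [ih, if_neg hb', mul_zero]
      · simp
    · have h2 : ¬ ((i:ℕ) = (j:ℕ) + (p+1)) := by omega
      rw [if_neg h2, Finset.sum_eq_zero]
      intro b _
      have hb' : ¬ ((b:ℕ) = (j:ℕ) + p) := by omega
      rw [ih, if_neg hb', mul_zero]

lemma sum_ite_lt (n m : ℕ) (c : ℝ) :
    (∑ i : Fin n, if (i : ℕ) < m then c else 0) = (min m n : ℕ) * c := by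
  induction n with
  | zero => simp
  | succ n ih =>
    rw [Fin.sum_univ_castSucc]
    simp only [Fin.coe_castSucc, Fin.val_last]
    rw [ih]
    by_cases h : n < m
    · rw [if_pos h]
      have h1 : min m (n+1) = n+1 := by omega
      have h2 : min m n = n := by omega
      rw [h1, h2]; push_cast; ring
    · rw [if_neg h]
      have h1 : min m (n+1) = min m n := by omega
      rw [h1]; ring

lemma trn_pow (n p : ℕ) :
    trn n (shiftΛ n ^ p) = if p < n then 1 else 0 := by
  unfold trn Matrix.trace
  have key : ∀ i : Fin n, (trM n * shiftΛ n ^ p) i i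
      = if (i:ℕ) < n - p then (((n : ℕ) - p : ℕ) : ℝ)⁻¹ else 0 := by
    intro i
    rw [Matrix.mul_apply]
    by_cases h : (i:ℕ) + p < n
    · rw [Finset.sum_eq_single (⟨(i:ℕ)+p, h⟩ : Fin n)]
      · rw [shift_pow_apply]
        simp only [trM, Matrix.of_apply]
        have h1 : (i:ℕ) ≤ ((⟨(i:ℕ)+p, h⟩ : Fin n) : ℕ) := Nat.le_add_right _ _
        have h2 : (i:ℕ) < n - p := by omega
        rw [if_pos h1, if_pos h2,
          if_true, mul_one]
        congr 1
        rw [Nat.cast_sub (by omega : p ≤ n)]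
        push_cast
        ring
      · intro b _ hb
        rw [shift_pow_apply]
        have hb' : ¬ ((b:ℕ) = (i:ℕ) + p) := fun hh => hb (Fin.ext hh)
        rw [if_neg hb', mul_zero]
      · simp
    · have h2 : ¬ ((i:ℕ) < n - p) := by omega
      rw [if_neg h2, Finset.sum_eq_zero]
      intro b _
      rw [shift_pow_apply]
      have hb' : ¬ ((b:ℕ) = (i:ℕ) + p) := by omega
      rw [if_neg hb', mul_zero]
  have : ∀ i : Fin n, Matrix.diag (trM n * shiftΛ n ^ p) i
      = if (i:ℕ) < n - p then (((n : ℕ) - p : ℕ) : ℝ)⁻¹ else 0 := key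
  rw [Finset.sum_congr rfl fun i _ => this i, sum_ite_lt]
  have hmin : min (n-p) n = n - p := by omega
  rw [hmin]
  by_cases hp : p < n
  · rw [if_pos hp]
    have hne : (((n - p : ℕ)) : ℝ) ≠ 0 := by
      have : 0 < n - p := by omega
      positivity
    exact mul_inv_cancel₀ hne
  · rw [if_neg hp]
    have h0 : n - p = 0 := by omega
    simp [h0]

lemma comm_aux {n k : ℕ} : ∀ B ∈ Zn n, shiftΛ n ^ k * B = B * shiftΛ n ^ k := by
  intro B hB
  induction hB using Submodule.span_induction with
  | mem x hx =>
    obtain ⟨m, rfl⟩ := hx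
    exact ((Commute.refl (shiftΛ n)).pow_pow k (m : ℕ)).eq
  | zero => simp
  | add x y _ _ hx hy => rw [mul_add, add_mul, hx, hy]
  | smul r x _ hx => rw [mul_smul_comm, smul_mul_assoc, hx]

lemma Zn_comm {n : ℕ} {A B : Matrix (Fin n) (Fin n) ℝ}
    (hA : A ∈ Zn n) (hB : B ∈ Zn n) : A * B = B * A := by
  induction hA using Submodule.span_induction with
  | mem x hx =>
    obtain ⟨m, rfl⟩ := hx
    exact comm_aux B hB
  | zero => simp
  | add x y _ _ hx hy => rw [add_mul, mul_add, hx, hy]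
  | smul r x _ hx => rw [smul_mul_assoc, mul_smul_comm, hx]

theorem stmt5 (n : ℕ) (hn : 1 ≤ n) :
    (∀ A ∈ Zn n, ∀ B ∈ Zn n, trn n (A * B) = trn n (B * A))
      ∧ (∀ A ∈ Zn n, A ≠ 0 → ∃ B ∈ Zn n, trn n (A * B) ≠ 0) := by
  constructor
  · intro A hA B hB
    rw [Zn_comm hA hB]
  · intro A hA hA0
    obtain ⟨c, hc⟩ := (Submodule.mem_span_range_iff_exists_fun ℝ).mp hA
    set S := Finset.univ.filter (fun k : Fin n => c k ≠ 0) with hSdef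
    have hS : S.Nonempty := by
      by_contra hne
      apply hA0
      rw [← hc]
      apply Finset.sum_eq_zero
      intro k _
      have hck : c k = 0 := by
        by_contra hck
        exact hne ⟨k, Finset.mem_filter.mpr ⟨Finset.mem_univ _, hck⟩⟩
      simp [hck]
    set k₀ := S.min' hS with hk0def
    have hk₀ : c k₀ ≠ 0 := (Finset.mem_filter.mp (S.min'_mem hS)).2
    have hmin : ∀ k : Fin n, k < k₀ → c k = 0 := by
      intro k hk
      by_contra hck
      exact absurd (S.min'_le k (Finset.mem_filter.mpr ⟨Finset.mem_univ _, hck⟩))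
        (not_le.mpr hk)
    have hm : n - 1 - (k₀:ℕ) < n := by omega
    refine ⟨shiftΛ n ^ (n - 1 - (k₀:ℕ)),
      Submodule.subset_span ⟨⟨n - 1 - (k₀:ℕ), hm⟩, rfl⟩, ?_⟩
    rw [← hc, Finset.sum_mul]
    have emul : ∀ k : Fin n, (c k • shiftΛ n ^ (k:ℕ)) * shiftΛ n ^ (n - 1 - (k₀:ℕ))
        = c k • shiftΛ n ^ ((k:ℕ) + (n - 1 - (k₀:ℕ))) := fun k => by
      rw [smul_mul_assoc, ← pow_add]
    rw [Finset.sum_congr rfl fun k _ => emul k]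
    have hlin : trn n (∑ k : Fin n, c k • shiftΛ n ^ ((k:ℕ) + (n - 1 - (k₀:ℕ))))
        = ∑ k : Fin n, c k * trn n (shiftΛ n ^ ((k:ℕ) + (n - 1 - (k₀:ℕ)))) := by
      unfold trn
      rw [Matrix.mul_sum, Matrix.trace_sum]
      exact Finset.sum_congr rfl fun k _ => by
        rw [Matrix.mul_smul, Matrix.trace_smul, smul_eq_mul]
    rw [hlin]
    have hterm : ∀ k : Fin n, c k * trn n (shiftΛ n ^ ((k:ℕ) + (n - 1 - (k₀:ℕ))))
        = if k = k₀ then c k₀ else 0 := by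
      intro k
      rw [trn_pow]
      by_cases hk : k = k₀
      · have hval : (k:ℕ) = (k₀:ℕ) := by rw [hk]
        have hlt : (k:ℕ) + (n - 1 - (k₀:ℕ)) < n := by
          have h2 := k₀.isLt; omega
        rw [if_pos hlt, mul_one, if_pos hk, hk]
      · rw [if_neg hk]
        by_cases hlt : (k:ℕ) + (n - 1 - (k₀:ℕ)) < n
        · have hkk : k < k₀ := by
            rw [Fin.lt_def]
            have h1 : (k:ℕ) ≠ (k₀:ℕ) := fun hh => hk (Fin.ext hh)
            have h2 := k₀.isLt
            omega
          rw [hmin k hkk, zero_mul]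
        · rw [if_neg hlt, mul_zero]
    rw [Finset.sum_congr rfl fun k _ => hterm k, Finset.sum_ite_eq' Finset.univ k₀]
    simpa using hk₀
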